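/- If u with u(·,0) = 0 on U and u = 0 on ∂U × (0,T) satisfies the weighted-norm identity, then b_h(u,u) = (1/2)‖u(·,T)‖²_{L²(U)} + ν‖∇u‖²_{L²(Ω)} + Σ_K ε_K ‖Mu‖²_K exactly (not just as an inequality), where b_h is the GLS bilinear form and a is divergence-free. -/

import Mathlib

open MeasureTheory

/-- The `i`-th spatial partial derivative. -/
noncomputable def pderiv' (d : ℕ) (f : EuclideanSpace ℝ (Fin d) → ℝ)
    (i : Fin d) (x : EuclideanSpace ℝ (Fin d)) : ℝ :=
  fderiv ℝ f x (EuclideanSpace.single i 1)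

/-- The spatial Laplacian. -/
noncomputable def lap' (d : ℕ) (f : EuclideanSpace ℝ (Fin d) → ℝ)
    (x : EuclideanSpace ℝ (Fin d)) : ℝ :=
  ∑ i, pderiv' d (pderiv' d f i) i x

/-- The space-time advection-diffusion operator `Mu = ∂ₜu + a·∇u − νΔu`. -/
noncomputable def Mop (d : ℕ) (ν : ℝ)
    (a : EuclideanSpace ℝ (Fin d) → ℝ → EuclideanSpace ℝ (Fin d))
    (u : EuclideanSpace ℝ (Fin d) → ℝ → ℝ)
    (x : EuclideanSpace ℝ (Fin d)) (t : ℝ) : ℝ :=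
  deriv (u x) t + (∑ i, a x t i * pderiv' d (fun y => u y t) i x)
    - ν * lap' d (fun y => u y t) x

/-- The GLS-stabilized bilinear form
`b_h(u,v) = (∂ₜu, v) + (a·∇u, v) + (ν∇u, ∇v) + Σ_K ε_K (Mu, Mv)_K` on `Ω = U × (0,T)`. -/
noncomputable def bform (d : ℕ) (ν T : ℝ) (U : Set (EuclideanSpace ℝ (Fin d)))
    (a : EuclideanSpace ℝ (Fin d) → ℝ → EuclideanSpace ℝ (Fin d))
    (mesh : Finset (Set (EuclideanSpace ℝ (Fin d) × ℝ)))
    (ε : Set (EuclideanSpace ℝ (Fin d) × ℝ) → ℝ)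
    (u v : EuclideanSpace ℝ (Fin d) → ℝ → ℝ) : ℝ :=
  (∫ p in U ×ˢ Set.Ioo 0 T,
      (deriv (u p.1) p.2 * v p.1 p.2
        + (∑ i, a p.1 p.2 i * pderiv' d (fun y => u y p.2) i p.1) * v p.1 p.2
        + ν * ∑ i, pderiv' d (fun y => u y p.2) i p.1
              * pderiv' d (fun y => v y p.2) i p.1))
    + ∑ K ∈ mesh, ε K * ∫ p in K, Mop d ν a u p.1 p.2 * Mop d ν a v p.1 p.2

/-- The square of the discrete norm
`‖u‖²_{V_h} = ‖u‖²_{Γ_T} + ν‖∇u‖² + Σ_K ε_K ‖Mu‖²_K`. -/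
noncomputable def normVhSq (d : ℕ) (ν T : ℝ) (U : Set (EuclideanSpace ℝ (Fin d)))
    (a : EuclideanSpace ℝ (Fin d) → ℝ → EuclideanSpace ℝ (Fin d))
    (mesh : Finset (Set (EuclideanSpace ℝ (Fin d) × ℝ)))
    (ε : Set (EuclideanSpace ℝ (Fin d) × ℝ) → ℝ)
    (u : EuclideanSpace ℝ (Fin d) → ℝ → ℝ) : ℝ :=
  (∫ x in U, (u x T) ^ 2)
    + ν * (∫ p in U ×ˢ Set.Ioo 0 T, ∑ i, (pderiv' d (fun y => u y p.2) i p.1) ^ 2)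
    + ∑ K ∈ mesh, ε K * ∫ p in K, (Mop d ν a u p.1 p.2) ^ 2

/-- for `u` vanishing at `t = 0` and on the lateral boundary, with
divergence-free advection, the GLS bilinear form satisfies the exact identity
`b_h(u,u) = (1/2)‖u(·,T)‖²_{L²(U)} + ν‖∇u‖²_{L²(Ω)} + Σ_K ε_K ‖Mu‖²_K`. -/
lemma abs_coord_le_norm {d : ℕ} (x : EuclideanSpace ℝ (Fin d)) (i : Fin d) : |x i| ≤ ‖x‖ := by
  rw [EuclideanSpace.norm_eq, ← Real.sqrt_sq_eq_abs]
  apply Real.sqrt_le_sqrt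
  have := Finset.single_le_sum (f := fun j => ‖x j‖ ^ 2)
    (fun j _ => by positivity) (Finset.mem_univ i)
  simpa [Real.norm_eq_abs, sq_abs] using this

lemma adv_zero {n : ℕ} (U : Set (EuclideanSpace ℝ (Fin (n+1))))
    (hU : Bornology.IsBounded U) (hUmeas : MeasurableSet U)
    (b : EuclideanSpace ℝ (Fin (n+1)) → EuclideanSpace ℝ (Fin (n+1))) (hb : ContDiff ℝ 1 b)
    (hdiv : ∀ x ∈ U, ∑ i, pderiv' (n+1) (fun y => b y i) i x = 0)
    (w : EuclideanSpace ℝ (Fin (n+1)) → ℝ) (hw : ContDiff ℝ 1 w)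
    (hbd : ∀ x ∈ frontier U, w x = 0) :
    ∫ x in U, (∑ i, b x i * pderiv' (n+1) w i x) * w x = 0 := by
  classical
  set φ : EuclideanSpace ℝ (Fin (n+1)) → ℝ := fun x => w x * w x with hφdef
  have hφ : ContDiff ℝ 1 φ := hw.mul hw
  set F : EuclideanSpace ℝ (Fin (n+1)) → EuclideanSpace ℝ (Fin (n+1)) :=
    fun x => φ x • b x with hFdef
  have hF : ContDiff ℝ 1 F := hφ.smul hb
  have hFderiv : ∀ x, HasFDerivAt F
      ((φ x) • (fderiv ℝ b x) + (fderiv ℝ φ x).smulRight (b x)) x :=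
    fun x => ((hφ.differentiable one_ne_zero x).hasFDerivAt).smul
      ((hb.differentiable one_ne_zero x).hasFDerivAt)
  have hφfront : ∀ x ∈ frontier U, φ x = 0 ∧ fderiv ℝ φ x = 0 := by
    intro x hx
    have h0 : φ x = 0 := by simp [hφdef, hbd x hx]
    refine ⟨h0, ?_⟩
    have hmin : IsLocalMin φ x := Filter.Eventually.of_forall fun y => by
      rw [h0]; exact mul_self_nonneg _
    exact hmin.fderiv_eq_zero
  have hFfront : ∀ x ∈ frontier U, fderiv ℝ F x = 0 := by
    intro x hx
    obtain ⟨h0, h1⟩ := hφfront x hx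
    rw [(hFderiv x).fderiv, h0, h1]
    ext v
    simp
  set C := closure U with hC
  have hCclosed : IsClosed C := isClosed_closure
  have hCcomp : IsCompact C := hU.isCompact_closure
  set g := C.indicator F with hgdef
  set g' := C.indicator (fun x => fderiv ℝ F x) with hg'def
  have hgF : ∀ x ∈ C, g x = F x := fun x hx => Set.indicator_of_mem hx F
  have hder : ∀ x, HasFDerivAt g (g' x) x := by
    intro x
    by_cases hxi : x ∈ interior C
    · have hxC : x ∈ C := interior_subset hxi
      rw [show g' x = fderiv ℝ F x from Set.indicator_of_mem hxC _]
      have hev : g =ᶠ[nhds x] F := Filter.eventually_of_mem (isOpen_interior.mem_nhds hxi)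
        (fun y hy => Set.indicator_of_mem (interior_subset hy) F)
      exact ((hF.differentiable one_ne_zero x).hasFDerivAt).congr_of_eventuallyEq hev
    · by_cases hxC : x ∈ C
      · have hxf : x ∈ frontier C := ⟨by rwa [hCclosed.closure_eq], hxi⟩
        have hxU : x ∈ frontier U := frontier_closure_subset hxf
        rw [show g' x = 0 by rw [hg'def, Set.indicator_of_mem hxC, hFfront x hxU]]
        have hgx : g x = 0 := by
          rw [hgF x hxC, hFdef]; simp [(hφfront x hxU).1]
        refine HasFDerivAt.of_isLittleO ?_
        rw [Asymptotics.isLittleO_iff]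
        intro c hc
        have hφo : (fun y => φ y) =o[nhds x] (fun y => y - x) := by
          have h2 := ((hφ.differentiable one_ne_zero x).hasFDerivAt).isLittleO
          rw [(hφfront x hxU).2] at h2
          simpa [(hφfront x hxU).1] using h2
        set M := ‖b x‖ + 1 with hMdef
        have hM : 0 < M := by positivity
        have hb_bd : ∀ᶠ y in nhds x, ‖b y‖ ≤ M := by
          have h3 : ContinuousAt (fun y => ‖b y‖) x := hb.continuous.norm.continuousAt
          exact (h3.eventually_lt_const (lt_add_one _)).mono fun y hy => hy.le
        have hφc : ∀ᶠ y in nhds x, ‖φ y‖ ≤ (c / M) * ‖y - x‖ :=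
          (Asymptotics.isLittleO_iff.mp hφo) (div_pos hc hM)
        filter_upwards [hb_bd, hφc] with y hy1 hy2
        have hgy : ‖g y‖ ≤ ‖φ y‖ * ‖b y‖ := by
          by_cases hyC : y ∈ C
          · have hy3 : g y = φ y • b y := hgF y hyC
            rw [hy3, norm_smul]
          · rw [hgdef, Set.indicator_of_notMem hyC]
            simp only [norm_zero]
            positivity
        have : ‖g y‖ ≤ c * ‖y - x‖ := by
          calc ‖g y‖ ≤ ‖φ y‖ * ‖b y‖ := hgy
            _ ≤ ((c / M) * ‖y - x‖) * M :=
              mul_le_mul hy2 hy1 (norm_nonneg _) (by positivity)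
            _ = c * ‖y - x‖ := by field_simp
        simpa [hgx] using this
      · rw [show g' x = 0 from Set.indicator_of_notMem hxC _]
        have hev : g =ᶠ[nhds x] fun _ => (0 : EuclideanSpace ℝ (Fin (n+1))) :=
          Filter.eventually_of_mem (hCclosed.isOpen_compl.mem_nhds hxC)
            (fun y hy => Set.indicator_of_notMem hy F)
        exact (hasFDerivAt_const (0 : EuclideanSpace ℝ (Fin (n+1))) x).congr_of_eventuallyEq hev
  -- bounding box
  obtain ⟨r, hr⟩ := hU.subset_ball 0
  set c : ℝ := max r 0 + 1 with hcdef
  have hc0 : (0:ℝ) < c := by positivity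
  have hCc : ∀ x ∈ C, ‖x‖ < c := by
    intro x hx
    have h1 : C ⊆ Metric.closedBall 0 r :=
      hC ▸ (closure_mono hr).trans Metric.closure_ball_subset_closedBall
    have h2 := h1 hx
    rw [Metric.mem_closedBall, dist_zero_right] at h2
    calc ‖x‖ ≤ r := h2
      _ ≤ max r 0 := le_max_left _ _
      _ < c := by rw [hcdef]; linarith
  letI : PartialOrder (EuclideanSpace ℝ (Fin (n+1))) :=
    PartialOrder.lift WithLp.ofLp (WithLp.ofLp_injective 2)
  set eL : EuclideanSpace ℝ (Fin (n+1)) ≃L[ℝ] (Fin (n+1) → ℝ) :=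
    PiLp.continuousLinearEquiv 2 ℝ (fun _ : Fin (n+1) => ℝ) with heL
  set aa : EuclideanSpace ℝ (Fin (n+1)) := eL.symm (fun _ => -c) with haa
  set bb : EuclideanSpace ℝ (Fin (n+1)) := eL.symm (fun _ => c) with hbb
  have hab : aa ≤ bb := fun i => by
    show (-c : ℝ) ≤ c
    linarith
  have hsubC : C ⊆ Set.Icc aa bb := by
    intro x hx
    have hx' : ‖x‖ < c := hCc x hx
    constructor
    · intro i
      have habs : |x i| ≤ ‖x‖ := abs_coord_le_norm x i
      have h4 : |x i| < c := lt_of_le_of_lt habs hx'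
      show (-c : ℝ) ≤ x i
      linarith [(abs_lt.mp h4).1]
    · intro i
      have habs : |x i| ≤ ‖x‖ := abs_coord_le_norm x i
      have h4 : |x i| < c := lt_of_le_of_lt habs hx'
      show x i ≤ (c : ℝ)
      linarith [(abs_lt.mp h4).2]
  set divF : EuclideanSpace ℝ (Fin (n+1)) → ℝ :=
    fun x => ∑ i, (fderiv ℝ F x) (EuclideanSpace.single i 1) i with hdivF
  set DF := C.indicator divF with hDF
  have hdivFcont : Continuous divF := by
    apply continuous_finset_sum
    intro i _
    have h1 : Continuous fun x => fderiv ℝ F x := hF.continuous_fderiv one_ne_zero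
    have h2 : Continuous fun x => fderiv ℝ F x (EuclideanSpace.single i 1) :=
      h1.clm_apply continuous_const
    exact (EuclideanSpace.proj i).continuous.comp h2
  have hIntC : IntegrableOn divF C := hdivFcont.continuousOn.integrableOn_compact hCcomp
  have hIDF : Integrable DF := (integrable_indicator_iff hCclosed.measurableSet).mpr hIntC
  have hgcont : Continuous g := continuous_iff_continuousAt.mpr fun x => (hder x).continuousAt
  have hDFarg : ∀ x, DF x
      = ∑ i, ((EuclideanSpace.proj i).comp (g' x)) (eL.symm (Pi.single i 1)) := by
    intro x
    by_cases hxC : x ∈ C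
    · rw [hDF, Set.indicator_of_mem hxC,
        show g' x = fderiv ℝ F x from Set.indicator_of_mem hxC _]
      rfl
    · rw [hDF, Set.indicator_of_notMem hxC,
        show g' x = 0 from Set.indicator_of_notMem hxC _]
      simp
  have hthm := MeasureTheory.integral_divergence_of_hasFDerivAt_off_countable_of_equiv
      eL (fun x y => Iff.rfl) (EuclideanSpace.volume_preserving_symm_measurableEquiv_toLp (Fin (n+1)))
      (fun i x => g x i) (fun i x => (EuclideanSpace.proj i).comp (g' x)) ∅ Set.countable_empty
      aa bb hab
      (fun i => ((EuclideanSpace.proj i).continuous.comp hgcont).continuousOn)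
      (fun x _ i => by exact (EuclideanSpace.proj i).hasFDerivAt.comp x (hder x))
      DF hDFarg hIDF.integrableOn
  have hfaces : ∀ (i : Fin (n+1)) (z : Fin n → ℝ) (s : ℝ), |s| = c →
      g (eL.symm (i.insertNth s z)) = 0 := by
    intro i z s hs
    apply Set.indicator_of_notMem
    intro hmem
    have h1 := hCc _ hmem
    have h2 : |(eL.symm (i.insertNth s z) : EuclideanSpace ℝ (Fin (n+1))) i|
        ≤ ‖(eL.symm (i.insertNth s z) : EuclideanSpace ℝ (Fin (n+1)))‖ :=
      abs_coord_le_norm _ i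
    have h3 : (eL.symm (i.insertNth s z) : EuclideanSpace ℝ (Fin (n+1))) i = s := by
      exact Fin.insertNth_apply_same (α := fun _ => ℝ) i s z
    rw [h3, hs] at h2
    linarith
  have hIcc0 : ∫ x in Set.Icc aa bb, DF x = 0 := by
    rw [hthm]
    apply Finset.sum_eq_zero
    intro i _
    have hbbc : eL bb i = c := by rw [hbb, eL.apply_symm_apply]
    have haac : eL aa i = -c := by rw [haa, eL.apply_symm_apply]
    have h1 : ∀ z : Fin n → ℝ, g (eL.symm (i.insertNth (eL bb i) z)) i = 0 := by
      intro z
      rw [hfaces i z (eL bb i) (by rw [hbbc]; exact abs_of_pos hc0)]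
      rfl
    have h2 : ∀ z : Fin n → ℝ, g (eL.symm (i.insertNth (eL aa i) z)) i = 0 := by
      intro z
      rw [hfaces i z (eL aa i) (by rw [haac, abs_neg]; exact abs_of_pos hc0)]
      rfl
    simp only [h1, h2, integral_zero, sub_zero]
  -- compute divF on U
  have hcomp : ∀ (v : EuclideanSpace ℝ (Fin (n+1)) → EuclideanSpace ℝ (Fin (n+1))),
      ContDiff ℝ 1 v → ∀ (i : Fin (n+1)) x, pderiv' (n+1) (fun y => v y i) i x
        = (fderiv ℝ v x (EuclideanSpace.single i 1)) i := by
    intro v hv i x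
    have h1 : HasFDerivAt (fun y => v y i) ((EuclideanSpace.proj i).comp (fderiv ℝ v x)) x := by
      exact (EuclideanSpace.proj i).hasFDerivAt.comp x (hv.differentiable one_ne_zero x).hasFDerivAt
    rw [pderiv', h1.fderiv]
    rfl
  have hφderiv : ∀ (i : Fin (n+1)) x, fderiv ℝ φ x (EuclideanSpace.single i 1)
      = 2 * w x * pderiv' (n+1) w i x := by
    intro i x
    have h1 : HasFDerivAt φ (w x • fderiv ℝ w x + w x • fderiv ℝ w x) x :=
      ((hw.differentiable one_ne_zero x).hasFDerivAt).mul ((hw.differentiable one_ne_zero x).hasFDerivAt)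
    rw [h1.fderiv]
    simp only [ContinuousLinearMap.add_apply, ContinuousLinearMap.smul_apply, smul_eq_mul,
      pderiv']
    ring
  have claim1 : ∀ x ∈ U, (∑ i, b x i * pderiv' (n+1) w i x) * w x = divF x / 2 := by
    intro x hx
    have h1 : ∀ i : Fin (n+1), (fderiv ℝ F x) (EuclideanSpace.single i 1) i
        = φ x * pderiv' (n+1) (fun y => b y i) i x
          + (2 * w x * pderiv' (n+1) w i x) * b x i := by
      intro i
      calc (fderiv ℝ F x (EuclideanSpace.single i 1)) i
          = (φ x • (fderiv ℝ b x (EuclideanSpace.single i 1))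
              + (fderiv ℝ φ x (EuclideanSpace.single i 1)) • b x) i := by
            rw [(hFderiv x).fderiv]; rfl
        _ = φ x * (fderiv ℝ b x (EuclideanSpace.single i 1)) i
              + (fderiv ℝ φ x (EuclideanSpace.single i 1)) * b x i := rfl
        _ = φ x * pderiv' (n+1) (fun y => b y i) i x
              + (2 * w x * pderiv' (n+1) w i x) * b x i := by
            rw [← hcomp b hb i x, hφderiv i x]
    have h2 : divF x = ∑ i, (φ x * pderiv' (n+1) (fun y => b y i) i x
        + (2 * w x * pderiv' (n+1) w i x) * b x i) :=
      Finset.sum_congr rfl fun i _ => h1 i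
    rw [h2, Finset.sum_add_distrib, ← Finset.mul_sum, hdiv x hx, mul_zero, zero_add]
    have h3 : ∑ i, (2 * w x * pderiv' (n+1) w i x) * b x i
        = 2 * w x * ∑ i, b x i * pderiv' (n+1) w i x := by
      rw [Finset.mul_sum]
      exact Finset.sum_congr rfl fun i _ => by ring
    rw [h3]
    ring
  have hDFeq2 : U.indicator divF = DF := by
    funext x
    by_cases hxU : x ∈ U
    · rw [Set.indicator_of_mem hxU, hDF, Set.indicator_of_mem (subset_closure hxU)]
    · by_cases hxC : x ∈ C
      · have hxf : x ∈ frontier U := ⟨hxC, fun h => hxU (interior_subset h)⟩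
        rw [Set.indicator_of_notMem hxU, hDF, Set.indicator_of_mem hxC]
        have h5 : fderiv ℝ F x = 0 := hFfront x hxf
        have : divF x = 0 := by
          rw [hdivF]
          simp [h5]
        rw [this]
      · rw [Set.indicator_of_notMem hxU, hDF, Set.indicator_of_notMem hxC]
  have hintU : ∫ x in U, divF x = 0 := by
    rw [← integral_indicator hUmeas, hDFeq2, hDF,
      integral_indicator hCclosed.measurableSet]
    have h6 : ∫ x in C, divF x = ∫ x in Set.Icc aa bb, DF x := by
      rw [hDF, setIntegral_indicator hCclosed.measurableSet,
        Set.inter_eq_self_of_subset_right hsubC]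
    rw [h6, hIcc0]
  calc ∫ x in U, (∑ i, b x i * pderiv' (n+1) w i x) * w x
      = ∫ x in U, divF x / 2 := setIntegral_congr_fun hUmeas claim1
    _ = (∫ x in U, divF x) / 2 := integral_div _ _
    _ = 0 := by rw [hintU]; norm_num
/-- FTC part for the time integral. -/
lemma time_part {T : ℝ} (hT : 0 < T) (f : ℝ → ℝ) (hf : ContDiffOn ℝ 1 f (Set.Icc 0 T))
    (h0 : f 0 = 0) :
    ∫ t in Set.Ioo 0 T, deriv f t * f t = f T * f T / 2 := by
  have hdiff : ∀ t ∈ Set.Ioo 0 T, HasDerivAt f (deriv f t) t := by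
    intro t ht
    have h1 : DifferentiableOn ℝ f (Set.Icc 0 T) := hf.differentiableOn one_ne_zero
    exact ((h1 t (Set.Ioo_subset_Icc_self ht)).differentiableAt
      (Icc_mem_nhds ht.1 ht.2)).hasDerivAt
  have hder2 : ∀ t ∈ Set.Ioo 0 T, HasDerivAt (fun s => f s * f s / 2) (deriv f t * f t) t := by
    intro t ht
    have h := ((hdiff t ht).mul (hdiff t ht)).div_const 2
    have heq : (deriv f t * f t + f t * deriv f t) / 2 = deriv f t * f t := by ring
    rwa [heq] at h
  have hcont : ContinuousOn f (Set.Icc 0 T) := hf.continuousOn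
  have hcont2 : ContinuousOn (fun s => f s * f s / 2) (Set.Icc 0 T) :=
    (hcont.mul hcont).div_const 2
  have hint : IntervalIntegrable (fun t => deriv f t * f t) volume 0 T := by
    rw [intervalIntegrable_iff_integrableOn_Ioo_of_le hT.le]
    have hg : ContinuousOn (fun t => derivWithin f (Set.Icc 0 T) t * f t) (Set.Icc 0 T) :=
      (hf.continuousOn_derivWithin (uniqueDiffOn_Icc hT) le_rfl).mul hcont
    have h2 : IntegrableOn (fun t => derivWithin f (Set.Icc 0 T) t * f t) (Set.Ioo 0 T) :=
      (hg.integrableOn_compact isCompact_Icc).mono_set Set.Ioo_subset_Icc_self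
    exact h2.congr_fun (fun t ht => by
      dsimp only; rw [derivWithin_of_mem_nhds (Icc_mem_nhds ht.1 ht.2)]) measurableSet_Ioo
  have hFTC := intervalIntegral.integral_eq_sub_of_hasDerivAt_of_le hT.le hcont2 hder2 hint
  rw [intervalIntegral.integral_of_le hT.le, integral_Ioc_eq_integral_Ioo] at hFTC
  rw [hFTC, h0]
  ring

lemma adv_zero' (d : ℕ) (U : Set (EuclideanSpace ℝ (Fin d)))
    (hU : Bornology.IsBounded U) (hUmeas : MeasurableSet U)
    (b : EuclideanSpace ℝ (Fin d) → EuclideanSpace ℝ (Fin d)) (hb : ContDiff ℝ 1 b)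
    (hdiv : ∀ x ∈ U, ∑ i, pderiv' d (fun y => b y i) i x = 0)
    (w : EuclideanSpace ℝ (Fin d) → ℝ) (hw : ContDiff ℝ 1 w)
    (hbd : ∀ x ∈ frontier U, w x = 0) :
    ∫ x in U, (∑ i, b x i * pderiv' d w i x) * w x = 0 := by
  cases d with
  | zero => simp
  | succ n => exact adv_zero U hU hUmeas b hb hdiv w hw hbd


theorem gls_diagonal_identity
    (d : ℕ) (ν T : ℝ) (hν : 0 < ν) (hT : 0 < T)
    (U : Set (EuclideanSpace ℝ (Fin d)))
    (hU : Bornology.IsBounded U) (hUmeas : MeasurableSet U)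
    (a : EuclideanSpace ℝ (Fin d) → ℝ → EuclideanSpace ℝ (Fin d))
    (ha : ∀ t ∈ Set.Icc (0:ℝ) T, ContDiff ℝ 1 (fun y => a y t))
    (hdiv : ∀ t ∈ Set.Icc (0:ℝ) T, ∀ x ∈ U,
      ∑ i, pderiv' d (fun y => a y t i) i x = 0)
    (mesh : Finset (Set (EuclideanSpace ℝ (Fin d) × ℝ)))
    (ε : Set (EuclideanSpace ℝ (Fin d) × ℝ) → ℝ)
    (hmesh : ∀ K ∈ mesh, K ⊆ U ×ˢ Set.Ioo 0 T)
    (u : EuclideanSpace ℝ (Fin d) → ℝ → ℝ)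
    (hregt : ∀ x ∈ U, ContDiffOn ℝ 1 (u x) (Set.Icc 0 T))
    (hregx : ∀ t ∈ Set.Icc (0:ℝ) T, ContDiff ℝ 2 (fun y => u y t))
    (hic : ∀ x ∈ U, u x 0 = 0)
    (hlateral : ∀ x ∈ frontier U, ∀ t ∈ Set.Icc (0:ℝ) T, u x t = 0)
    (hint1 : IntegrableOn (fun p : EuclideanSpace ℝ (Fin d) × ℝ =>
      deriv (u p.1) p.2 * u p.1 p.2) (U ×ˢ Set.Ioo 0 T))
    (hint2 : IntegrableOn (fun p : EuclideanSpace ℝ (Fin d) × ℝ =>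
      (∑ i, a p.1 p.2 i * pderiv' d (fun y => u y p.2) i p.1) * u p.1 p.2)
      (U ×ˢ Set.Ioo 0 T))
    (hint3 : IntegrableOn (fun p : EuclideanSpace ℝ (Fin d) × ℝ =>
      ∑ i, (pderiv' d (fun y => u y p.2) i p.1) ^ 2) (U ×ˢ Set.Ioo 0 T)) :
    bform d ν T U a mesh ε u u
      = (1 / 2) * (∫ x in U, (u x T) ^ 2)
        + ν * (∫ p in U ×ˢ Set.Ioo 0 T, ∑ i, (pderiv' d (fun y => u y p.2) i p.1) ^ 2)
        + ∑ K ∈ mesh, ε K * ∫ p in K, (Mop d ν a u p.1 p.2) ^ 2 := by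
  have hvol : (volume : Measure (EuclideanSpace ℝ (Fin d) × ℝ))
      = Measure.prod volume volume := rfl
  have hterm1 : (∫ p in U ×ˢ Set.Ioo 0 T,
      deriv (u p.1) p.2 * u p.1 p.2) = (1/2) * ∫ x in U, u x T * u x T := by
    rw [hvol] at hint1 ⊢
    rw [setIntegral_prod _ hint1]
    rw [setIntegral_congr_fun hUmeas
      (fun x hx => time_part hT (u x) (hregt x hx) (hic x hx))]
    rw [integral_div]
    ring
  have hterm2 : (∫ p in U ×ˢ Set.Ioo 0 T,
      (∑ i, a p.1 p.2 i * pderiv' d (fun y => u y p.2) i p.1) * u p.1 p.2) = 0 := by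
    rw [hvol] at hint2 ⊢
    have hint2' : Integrable (fun p : EuclideanSpace ℝ (Fin d) × ℝ =>
        (∑ i, a p.1 p.2 i * pderiv' d (fun y => u y p.2) i p.1) * u p.1 p.2)
        ((volume.restrict U).prod (volume.restrict (Set.Ioo 0 T))) := by
      rw [Measure.prod_restrict]
      exact hint2
    rw [← Measure.prod_restrict]
    rw [integral_prod_symm _ hint2']
    have hinner : ∀ t ∈ Set.Ioo (0:ℝ) T,
        (∫ x in U, (∑ i, a x t i * pderiv' d (fun y => u y t) i x) * u x t) = 0 := by
      intro t ht
      have htIcc : t ∈ Set.Icc (0:ℝ) T := Set.Ioo_subset_Icc_self ht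
      exact adv_zero' d U hU hUmeas (fun y => a y t) (ha t htIcc) (hdiv t htIcc)
        (fun y => u y t) ((hregx t htIcc).of_le one_le_two)
        (fun x hx => hlateral x hx t htIcc)
    rw [setIntegral_congr_fun measurableSet_Ioo hinner]
    simp
  have h3 : IntegrableOn (fun p : EuclideanSpace ℝ (Fin d) × ℝ =>
      ν * ∑ i, pderiv' d (fun y => u y p.2) i p.1 * pderiv' d (fun y => u y p.2) i p.1)
      (U ×ˢ Set.Ioo 0 T) := by
    simpa only [pow_two, IntegrableOn] using hint3.const_mul ν
  have h12 : IntegrableOn (fun p : EuclideanSpace ℝ (Fin d) × ℝ =>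
      deriv (u p.1) p.2 * u p.1 p.2
        + (∑ i, a p.1 p.2 i * pderiv' d (fun y => u y p.2) i p.1) * u p.1 p.2)
      (U ×ˢ Set.Ioo 0 T) := hint1.add hint2
  simp only [bform, pow_two]
  rw [integral_add h12 h3, integral_add hint1 hint2, hterm1, hterm2,
    integral_const_mul]
  ring
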